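/- Let β > 0, ω, γ ≥ 0, and let f : [0,1] → ℝ be given by f(s) = Σ_{k≥0} (p_k − ε_k) s^k where p is a probability mass function on ℕ, 0 ≤ ε_k ≤ p_k for all k, the mean μ_D = Σ k p_k satisfies 0 < μ_D < ∞, and Σ_k k ε_k > 0. Then the equation (β+ω+γ)s − (ω+γ) = (β/μ_D) f'(s) has a unique solution s in [0,1). -/

import Mathlib

open Set

/-- Auxiliary: summability of `n * r^(n-1)` for `0 ≤ r < 1`. -/
lemma aux_summable_deriv_geom {r : ℝ} (h0 : 0 ≤ r) (h1 : r < 1) :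
    Summable fun n : ℕ => (n : ℝ) * r ^ (n - 1) := by
  have hr : ‖r‖ < 1 := by rwa [Real.norm_eq_abs, abs_of_nonneg h0]
  have h₁ : Summable fun n : ℕ => (n : ℝ) ^ 1 * r ^ n :=
    summable_pow_mul_geometric_of_norm_lt_one 1 hr
  have h₂ : Summable fun n : ℕ => r ^ n := summable_geometric_of_lt_one h0 h1
  have h₃ : Summable fun n : ℕ => ((n : ℝ) + 1) * r ^ n := by
    have := h₁.add h₂
    convert this using 2 with n
    ring
  rw [← summable_nat_add_iff 1]
  convert h₃ using 2 with n
  push_cast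
  rfl
  simp

/-- The final-size equation
`(β+ω+γ)s − (ω+γ) = (β/μ_D) f'(s)`, with `f(s) = Σ (p_k − ε_k) s^k`,
has a unique solution in `[0,1)` when the epidemic is started with a positive
fraction of initially infected stubs (`Σ k ε_k > 0`). -/
theorem stmt_1 (β ω γ : ℝ) (hβ : 0 < β) (hω : 0 ≤ ω) (hγ : 0 ≤ γ)
    (p ε : ℕ → ℝ) (hp : ∀ k, 0 ≤ p k) (hp1 : ∑' k : ℕ, p k = 1)
    (hε : ∀ k, 0 ≤ ε k ∧ ε k ≤ p k)
    (μD : ℝ) (hμ : μD = ∑' k : ℕ, (k : ℝ) * p k) (hμpos : 0 < μD)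
    (hsum : Summable fun k : ℕ => (k : ℝ) * p k)
    (hεE : 0 < ∑' k : ℕ, (k : ℝ) * ε k)
    (f : ℝ → ℝ) (hf : ∀ s, f s = ∑' k : ℕ, (p k - ε k) * s ^ k) :
    ∃! s : ℝ, s ∈ Set.Ico (0 : ℝ) 1 ∧
      (β + ω + γ) * s - (ω + γ) = β / μD * deriv f s := by
  classical
  set q : ℕ → ℝ := fun k => p k - ε k with hq
  have hq0 : ∀ k, 0 ≤ q k := fun k => sub_nonneg.2 (hε k).2
  have hqp : ∀ k, q k ≤ p k := fun k => sub_le_self _ (hε k).1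
  -- p is summable
  have hpsum : Summable p := by
    by_contra h
    rw [tsum_eq_zero_of_not_summable h] at hp1
    norm_num at hp1
  have hq1 : ∀ k, q k ≤ 1 := fun k => le_trans (hqp k) (hp1 ▸ Summable.le_tsum hpsum k fun j _ => hp j)
  have hsumq : Summable fun k : ℕ => (k : ℝ) * q k :=
    Summable.of_nonneg_of_le (fun k => mul_nonneg (Nat.cast_nonneg k) (hq0 k))
      (fun k => mul_le_mul_of_nonneg_left (hqp k) (Nat.cast_nonneg k)) hsum
  have hsumε : Summable fun k : ℕ => (k : ℝ) * ε k :=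
    Summable.of_nonneg_of_le (fun k => mul_nonneg (Nat.cast_nonneg k) (hε k).1)
      (fun k => mul_le_mul_of_nonneg_left (hε k).2 (Nat.cast_nonneg k)) hsum
  set E : ℝ := ∑' k : ℕ, (k : ℝ) * ε k with hE
  have hqE : ∑' k : ℕ, (k : ℝ) * q k = μD - E := by
    rw [hμ, hE, ← Summable.tsum_sub hsum hsumε]
    congr 1; ext k; simp [hq]; ring
  set c : ℝ := β / μD with hc
  have hcpos : 0 < c := div_pos hβ hμpos
  -- the derivative series
  set g : ℝ → ℝ := fun s => ∑' k : ℕ, (k : ℝ) * q k * s ^ (k - 1) with hg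
  have hgsum : ∀ s ∈ Icc (0 : ℝ) 1, Summable fun k : ℕ => (k : ℝ) * q k * s ^ (k - 1) := by
    intro s hs
    refine Summable.of_nonneg_of_le (fun k => ?_) (fun k => ?_) hsumq
    · exact mul_nonneg (mul_nonneg (Nat.cast_nonneg k) (hq0 k)) (pow_nonneg hs.1 _)
    · exact mul_le_of_le_one_right (mul_nonneg (Nat.cast_nonneg k) (hq0 k))
        (pow_le_one₀ hs.1 hs.2)
  have hgle : ∀ s ∈ Icc (0 : ℝ) 1, g s ≤ μD - E := by
    intro s hs
    rw [hg, ← hqE]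
    refine Summable.tsum_le_tsum (fun k => ?_) (hgsum s hs) hsumq
    exact mul_le_of_le_one_right (mul_nonneg (Nat.cast_nonneg k) (hq0 k))
      (pow_le_one₀ hs.1 hs.2)
  have hgnonneg : ∀ s ∈ Icc (0 : ℝ) 1, 0 ≤ g s := by
    intro s hs
    exact tsum_nonneg fun k =>
      mul_nonneg (mul_nonneg (Nat.cast_nonneg k) (hq0 k)) (pow_nonneg hs.1 _)
  -- f as a tsum of q
  have hfq : f = fun z => ∑' k : ℕ, q k * z ^ k := by
    funext z; rw [hf z]
  -- derivative of f
  have hderiv : ∀ s ∈ Ioo (-1 : ℝ) 1, HasDerivAt f (g s) s := by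
    intro s hs
    set r : ℝ := (|s| + 1) / 2 with hr
    have habs : |s| < 1 := abs_lt.2 ⟨hs.1, hs.2⟩
    have hsr : |s| < r := by rw [hr]; linarith
    have hr0 : 0 ≤ r := by positivity
    have hr1 : r < 1 := by rw [hr]; linarith
    have hu : Summable fun n : ℕ => (n : ℝ) * r ^ (n - 1) :=
      aux_summable_deriv_geom hr0 hr1
    have key : HasDerivAt (fun z => ∑' k : ℕ, q k * z ^ k)
        (∑' k : ℕ, (k : ℝ) * q k * s ^ (k - 1)) s := by
      refine hasDerivAt_tsum_of_isPreconnected (y₀ := 0) hu isOpen_Ioo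
        (isPreconnected_Ioo (a := -r) (b := r))
        (g' := fun (n : ℕ) (y : ℝ) => (n : ℝ) * q n * y ^ (n - 1))
        (fun (n : ℕ) (y : ℝ) _ => ?_) (fun (n : ℕ) (y : ℝ) hy => ?_) ?_ ?_ ?_
      · have := (hasDerivAt_pow n y).const_mul (q n)
        convert this using 1; rfl; ring
      · have hya : |y| ≤ r := by
          rw [abs_le]; exact ⟨(mem_Ioo.1 hy).1.le, (mem_Ioo.1 hy).2.le⟩
        have : |(n : ℝ) * q n * y ^ (n - 1)| = (n : ℝ) * q n * |y| ^ (n - 1) := by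
          rw [abs_mul, abs_pow, abs_of_nonneg (mul_nonneg (Nat.cast_nonneg n) (hq0 n))]
        rw [Real.norm_eq_abs, this]
        calc (n : ℝ) * q n * |y| ^ (n - 1) ≤ (n : ℝ) * 1 * r ^ (n - 1) := by
              apply mul_le_mul
              · exact mul_le_mul_of_nonneg_left (hq1 n) (Nat.cast_nonneg n)
              · exact pow_le_pow_left₀ (abs_nonneg y) hya _
              · exact pow_nonneg (abs_nonneg y) _
              · positivity
          _ = (n : ℝ) * r ^ (n - 1) := by ring
      · exact mem_Ioo.2 ⟨by linarith [abs_nonneg s, hsr], by linarith [abs_nonneg s, hsr]⟩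
      · refine summable_of_ne_finset_zero (s := {0}) fun n hn => ?_
        have : n ≠ 0 := by simpa using hn
        simp [zero_pow this]
      · exact mem_Ioo.2 ⟨neg_lt_of_abs_lt hsr, lt_of_abs_lt hsr⟩
    rw [hfq]
    exact key
  have hderiv_eq : ∀ s ∈ Ioo (-1 : ℝ) 1, deriv f s = g s := fun s hs => (hderiv s hs).deriv
  -- the function D
  set D : ℝ → ℝ := fun s => (β + ω + γ) * s - (ω + γ) - c * g s with hD
  have hEle : E ≤ μD := by
    have h0 : 0 ≤ ∑' k : ℕ, (k : ℝ) * q k :=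
      tsum_nonneg fun k => mul_nonneg (Nat.cast_nonneg k) (hq0 k)
    rw [hqE] at h0; linarith
  -- lower bound
  have hcμE : c * (μD - E) = β - β * E / μD := by
    rw [hc]; field_simp
  have hlow : ∀ s ∈ Icc (0 : ℝ) 1, (β + ω + γ) * (s - 1) + β * E / μD ≤ D s := by
    intro s hs
    have h1 : c * g s ≤ c * (μD - E) := mul_le_mul_of_nonneg_left (hgle s hs) hcpos.le
    rw [hcμE] at h1
    rw [hD]; simp only
    linarith
  set δ : ℝ := β * E / μD / (β + ω + γ) with hδdef
  have hβωγ : 0 < β + ω + γ := by linarith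
  have hδpos : 0 < δ := div_pos (div_pos (mul_pos hβ hεE) hμpos) hβωγ
  have hδeq : β * E / μD = δ * (β + ω + γ) := by
    rw [hδdef]; field_simp
  have hDpos : ∀ s ∈ Icc (0 : ℝ) 1, 1 - δ < s → 0 < D s := by
    intro s hs h
    have := hlow s hs
    have h2 : 0 < (β + ω + γ) * (s - 1) + β * E / μD := by
      rw [hδeq]
      have : (β + ω + γ) * (s - 1) + δ * (β + ω + γ) = (β + ω + γ) * (s - 1 + δ) := by ring
      rw [this]
      apply mul_pos hβωγ
      linarith
    exact lt_of_lt_of_le h2 this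
  have hD0 : D 0 ≤ 0 := by
    have := hgnonneg 0 (by constructor <;> norm_num)
    have h2 : 0 ≤ c * g 0 := mul_nonneg hcpos.le this
    rw [hD]; simp only
    linarith
  -- convexity of g on [0,1]
  have hgconv : ConvexOn ℝ (Icc (0 : ℝ) 1) g := by
    refine ⟨convex_Icc 0 1, fun x hx y hy a b ha hb hab => ?_⟩
    have hxy : a • x + b • y ∈ Icc (0 : ℝ) 1 := (convex_Icc 0 1) hx hy ha hb hab
    simp only [smul_eq_mul] at hxy ⊢
    have hterm : ∀ k : ℕ, (k : ℝ) * q k * (a * x + b * y) ^ (k - 1) ≤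
        a * ((k : ℝ) * q k * x ^ (k - 1)) + b * ((k : ℝ) * q k * y ^ (k - 1)) := by
      intro k
      have hpow : (a * x + b * y) ^ (k - 1) ≤ a * x ^ (k - 1) + b * y ^ (k - 1) := by
        have := (convexOn_pow (k - 1)).2 (mem_Ici.2 hx.1) (mem_Ici.2 hy.1) ha hb hab
        simpa using this
      have hkq : 0 ≤ (k : ℝ) * q k := mul_nonneg (Nat.cast_nonneg k) (hq0 k)
      calc (k : ℝ) * q k * (a * x + b * y) ^ (k - 1)
          ≤ (k : ℝ) * q k * (a * x ^ (k - 1) + b * y ^ (k - 1)) :=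
            mul_le_mul_of_nonneg_left hpow hkq
        _ = a * ((k : ℝ) * q k * x ^ (k - 1)) + b * ((k : ℝ) * q k * y ^ (k - 1)) := by ring
    have hsx := hgsum x hx
    have hsy := hgsum y hy
    have hrhs : Summable fun k : ℕ =>
        a * ((k : ℝ) * q k * x ^ (k - 1)) + b * ((k : ℝ) * q k * y ^ (k - 1)) :=
      (hsx.mul_left a).add (hsy.mul_left b)
    calc g (a * x + b * y) ≤ ∑' k : ℕ,
          (a * ((k : ℝ) * q k * x ^ (k - 1)) + b * ((k : ℝ) * q k * y ^ (k - 1))) :=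
          Summable.tsum_le_tsum hterm (hgsum _ hxy) hrhs
      _ = a • g x + b • g y := by
          rw [Summable.tsum_add (hsx.mul_left a) (hsy.mul_left b), tsum_mul_left, tsum_mul_left]
          simp [hg, smul_eq_mul]
  -- concavity of D on [0,1]
  have hDconc : ConcaveOn ℝ (Icc (0 : ℝ) 1) D := by
    have h1 : ConcaveOn ℝ (Icc (0 : ℝ) 1) (fun s : ℝ => (β + ω + γ) * s - (ω + γ)) := by
      refine ⟨convex_Icc 0 1, fun x _ y _ a b ha hb hab => ?_⟩
      simp only [smul_eq_mul]
      nlinarith [hab]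
    have h2 : ConvexOn ℝ (Icc (0 : ℝ) 1) (fun s : ℝ => c * g s) := by
      refine ⟨convex_Icc 0 1, fun x hx y hy a b ha hb hab => ?_⟩
      have hg2 := hgconv.2 hx hy ha hb hab
      simp only [smul_eq_mul] at hg2 ⊢
      refine le_trans (mul_le_mul_of_nonneg_left hg2 hcpos.le) (le_of_eq ?_)
      ring
    exact h1.sub h2
  -- continuity of g on [0, r] for r < 1
  have hgcont : ∀ r : ℝ, 0 ≤ r → r < 1 → ContinuousOn g (Icc (0 : ℝ) r) := by
    intro r hr0 hr1
    refine continuousOn_tsum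
      (fun k => (continuous_const.mul (continuous_pow _)).continuousOn)
      (aux_summable_deriv_geom hr0 hr1) fun n x hx => ?_
    have hxr : |x| ≤ r := by
      rw [abs_of_nonneg hx.1]; exact hx.2
    have : |(n : ℝ) * q n * x ^ (n - 1)| = (n : ℝ) * q n * |x| ^ (n - 1) := by
      rw [abs_mul, abs_pow, abs_of_nonneg (mul_nonneg (Nat.cast_nonneg n) (hq0 n))]
    rw [Real.norm_eq_abs, this]
    calc (n : ℝ) * q n * |x| ^ (n - 1) ≤ (n : ℝ) * 1 * r ^ (n - 1) := by
          apply mul_le_mul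
          · exact mul_le_mul_of_nonneg_left (hq1 n) (Nat.cast_nonneg n)
          · exact pow_le_pow_left₀ (abs_nonneg x) hxr _
          · exact pow_nonneg (abs_nonneg x) _
          · positivity
      _ = (n : ℝ) * r ^ (n - 1) := by ring
  -- choose a point t₀ < 1 where D is positive (for existence)
  set t₀ : ℝ := max (1 - δ / 2) (1 / 2) with ht₀def
  have ht₀0 : 0 ≤ t₀ := le_trans (by norm_num) (le_max_right _ _)
  have ht₀1 : t₀ < 1 := by
    apply max_lt
    · linarith
    · norm_num
  have ht₀mem : t₀ ∈ Icc (0 : ℝ) 1 := ⟨ht₀0, ht₀1.le⟩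
  have hDt₀ : 0 < D t₀ := by
    apply hDpos t₀ ht₀mem
    have := le_max_left (1 - δ / 2) (1 / 2)
    linarith
  -- existence via IVT on [0, t₀]
  have hDcont : ContinuousOn D (Icc (0 : ℝ) t₀) := by
    apply ContinuousOn.sub
    · apply ContinuousOn.sub
      · exact (continuous_const.mul continuous_id).continuousOn
      · exact continuousOn_const
    · exact continuousOn_const.mul ((hgcont t₀ ht₀0 ht₀1).mono (by simp [Icc_subset_Icc_right]))
  obtain ⟨s₀, hs₀mem, hs₀⟩ : ∃ s₀ ∈ Icc (0 : ℝ) t₀, D s₀ = 0 := by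
    have h := intermediate_value_Icc ht₀0 hDcont
    have : (0 : ℝ) ∈ Icc (D 0) (D t₀) := ⟨hD0, hDt₀.le⟩
    obtain ⟨x, hx, hfx⟩ := h this
    exact ⟨x, hx, hfx⟩
  have hs₀Ico : s₀ ∈ Ico (0 : ℝ) 1 := ⟨hs₀mem.1, lt_of_le_of_lt hs₀mem.2 ht₀1⟩
  have hIoo : ∀ s : ℝ, s ∈ Ico (0 : ℝ) 1 → s ∈ Ioo (-1 : ℝ) 1 :=
    fun s hs => ⟨by linarith [hs.1], hs.2⟩
  -- zeros of D in [0,1) characterize solutions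
  have hsol_iff : ∀ s : ℝ, s ∈ Ico (0 : ℝ) 1 →
      ((β + ω + γ) * s - (ω + γ) = β / μD * deriv f s ↔ D s = 0) := by
    intro s hs
    rw [hderiv_eq s (hIoo s hs), hD]
    constructor
    · intro h; simp only; rw [hc]; linarith
    · intro h; simp only at h; rw [hc] at h; linarith
  -- uniqueness of zeros of D in [0,1)
  have huniq : ∀ a b : ℝ, a ∈ Ico (0 : ℝ) 1 → b ∈ Ico (0 : ℝ) 1 →
      D a = 0 → D b = 0 → a = b := by
    have key : ∀ a b : ℝ, a ∈ Ico (0 : ℝ) 1 → b ∈ Ico (0 : ℝ) 1 →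
        D a = 0 → D b = 0 → a < b → False := by
      intro a b ha hb hDa hDb hab
      set t : ℝ := max (1 - δ / 2) ((b + 1) / 2) with htdef
      have htb : b < t := lt_of_lt_of_le (by linarith [hb.2]) (le_max_right _ _)
      have ht1 : t < 1 := by
        apply max_lt
        · linarith
        · linarith [hb.2]
      have ht0 : 0 ≤ t := le_trans (by linarith [hb.1, hb.2]) (le_max_right _ _)
      have htmem : t ∈ Icc (0 : ℝ) 1 := ⟨ht0, ht1.le⟩
      have hDt : 0 < D t := by
        apply hDpos t htmem
        have := le_max_left (1 - δ / 2) ((b + 1) / 2)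
        linarith
      have hamem : a ∈ Icc (0 : ℝ) 1 := ⟨ha.1, ha.2.le⟩
      have hbseg : b ∈ openSegment ℝ a t := by
        rw [openSegment_eq_Ioo (lt_trans hab htb)]
        exact ⟨hab, htb⟩
      have := hDconc.right_le_of_le_left hamem htmem hbseg (by rw [hDa, hDb])
      rw [hDb] at this
      linarith
    intro a b ha hb hDa hDb
    rcases lt_trichotomy a b with h | h | h
    · exact absurd (key a b ha hb hDa hDb h) not_false
    · exact h
    · exact absurd (key b a hb ha hDb hDa h) not_false
  refine ⟨s₀, ⟨hs₀Ico, (hsol_iff s₀ hs₀Ico).2 hs₀⟩, ?_⟩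
  rintro y ⟨hyIco, hy⟩
  exact huniq y s₀ hyIco hs₀Ico ((hsol_iff y hyIco).1 hy) hs₀
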